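/- Let G be a group, H ≤ G a subgroup, and H₀ ≤ H. Set 𝓗 = ⋂_{b ∈ N_G(H₀)} H^b (the intersection of the conjugates of H by elements normalizing H₀). Assume H₀ ≤ 𝓗 and that H₀ is invariant under every group automorphism of 𝓗. Then N_G(H₀) = N_G(𝓗). -/

import Mathlib

/-- Let `𝓗 = ⋂_{b ∈ N_G(H₀)} H^b`. If `H₀ ≤ 𝓗` and `H₀` is invariant under every
automorphism of `𝓗`, then `N_G(H₀) = N_G(𝓗)`. -/
theorem stmt10 {G : Type*} [Group G] (H H₀ : Subgroup G) (hH₀H : H₀ ≤ H)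
    (HH : Subgroup G)
    (hHH : HH = ⨅ b ∈ Subgroup.normalizer (H₀ : Set G), H.map (MulAut.conj b⁻¹).toMonoidHom)
    (hle : H₀ ≤ HH)
    (hinv : ∀ φ : ↥HH ≃* ↥HH,
      (H₀.subgroupOf HH).map φ.toMonoidHom = H₀.subgroupOf HH) :
    Subgroup.normalizer (H₀ : Set G) = Subgroup.normalizer (HH : Set G) := by
  have hmem : ∀ g : G, g ∈ HH ↔ ∀ c ∈ Subgroup.normalizer (H₀ : Set G), c * g * c⁻¹ ∈ H := by
    intro g
    rw [hHH]
    simp only [Subgroup.mem_iInf, Subgroup.mem_map]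
    constructor
    · intro h c hc
      obtain ⟨x, hx, hxe⟩ := h c hc
      have hg : g = c⁻¹ * x * c := by
        simpa [MulAut.conj] using hxe.symm
      subst hg
      simpa [mul_assoc] using hx
    · intro h c hc
      exact ⟨c * g * c⁻¹, h c hc, by simp [MulAut.conj, mul_assoc]⟩
  ext b
  rw [Subgroup.mem_normalizer_iff, Subgroup.mem_normalizer_iff]
  constructor
  · intro hb g
    have hb' : b ∈ Subgroup.normalizer (H₀ : Set G) := by
      rw [Subgroup.mem_normalizer_iff]; exact hb
    rw [hmem, hmem]
    constructor
    · intro h c hc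
      have := h (c * b) (mul_mem hc hb')
      simpa [mul_assoc] using this
    · intro h c hc
      have := h (c * b⁻¹) (mul_mem hc (inv_mem hb'))
      simpa [mul_assoc] using this
  · intro hb g
    have hbmem : ∀ x : G, x ∈ HH ↔ b * x * b⁻¹ ∈ HH := hb
    let φ : ↥HH ≃* ↥HH :=
      { toFun := fun x => ⟨b * x * b⁻¹, (hbmem x).mp x.2⟩
        invFun := fun x => ⟨b⁻¹ * x * b,
          (hbmem (b⁻¹ * x * b)).mpr (by simpa [mul_assoc] using x.2)⟩
        left_inv := fun x => by ext; simp [mul_assoc]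
        right_inv := fun x => by ext; simp [mul_assoc]
        map_mul' := fun x y => by ext; simp [mul_assoc] }
    constructor
    · intro hg
      have hgHH : g ∈ HH := hle hg
      have hx : (⟨g, hgHH⟩ : ↥HH) ∈ H₀.subgroupOf HH := by
        rwa [Subgroup.mem_subgroupOf]
      have : φ ⟨g, hgHH⟩ ∈ H₀.subgroupOf HH := by
        rw [← hinv φ]
        exact ⟨⟨g, hgHH⟩, hx, rfl⟩
      simpa [Subgroup.mem_subgroupOf, φ] using this
    · intro hg
      have hgHH : b * g * b⁻¹ ∈ HH := hle hg
      have hx : (⟨b * g * b⁻¹, hgHH⟩ : ↥HH) ∈ H₀.subgroupOf HH := by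
        rwa [Subgroup.mem_subgroupOf]
      have : φ.symm ⟨b * g * b⁻¹, hgHH⟩ ∈ H₀.subgroupOf HH := by
        rw [← hinv φ.symm]
        exact ⟨⟨b * g * b⁻¹, hgHH⟩, hx, rfl⟩
      have hgeq : (φ.symm ⟨b * g * b⁻¹, hgHH⟩ : G) = g := by
        simp [φ, mul_assoc]
      rw [Subgroup.mem_subgroupOf, hgeq] at this
      exact this
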